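/- Let 0 < ζ < 1 and G_r(z,y) = (1/2)·e^{-|z-y|} - (1/2)·e^{2ζ-z-y}. For every continuous f : [ζ,1] → ℝ that is not identically zero, ∫_ζ¹ ∫_ζ¹ f(z) G_r(z,y) f(y) dy dz > 0. -/

import Mathlib

open MeasureTheory Set

private lemma rck_aux (ζ : ℝ) (hζ1 : ζ < 1) (F : ℝ → ℝ) (hF : Continuous F)
    (hne : ∃ z ∈ Set.Icc ζ (1:ℝ), F z ≠ 0) :
    0 < ∫ z in ζ..1, ∫ y in ζ..1,
          F z * ((1/2) * Real.exp (-|z - y|) - (1/2) * Real.exp (2*ζ - z - y)) * F y := by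
  set u : ℝ → ℝ := fun y => Real.exp (-y) * F y with hu_def
  have hu : Continuous u := (Real.continuous_exp.comp continuous_neg).mul hF
  set g : ℝ → ℝ := fun t => ∫ y in t..1, u y with hg_def
  set h : ℝ → ℝ := fun t => (Real.exp (2*t) - Real.exp (2*ζ))/2 with hh_def
  have hh_cont : Continuous h :=
    ((Real.continuous_exp.comp (continuous_const.mul continuous_id)).sub
      continuous_const).div_const 2
  set A : ℝ → ℝ := fun z => ∫ y in ζ..z, u y * h y with hA_def
  have hdg : ∀ t, HasDerivAt g (-(u t)) t := by
    intro t
    have h1 : HasDerivAt (fun t => ∫ y in (1:ℝ)..t, u y) (u t) t :=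
      intervalIntegral.integral_hasDerivAt_right (hu.intervalIntegrable _ _)
        (hu.stronglyMeasurableAtFilter _ _) hu.continuousAt
    have h2 : g = fun t => -∫ y in (1:ℝ)..t, u y := by
      funext t
      show (∫ y in t..1, u y) = -∫ y in (1:ℝ)..t, u y
      rw [intervalIntegral.integral_symm]
    rw [h2]; exact h1.neg
  have hg_cont : Continuous g := continuous_iff_continuousAt.2 fun t => (hdg t).continuousAt
  have hdh : ∀ t, HasDerivAt h (Real.exp (2*t)) t := by
    intro t
    have h1 : HasDerivAt (fun t : ℝ => 2*t) 2 t := by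
      simpa using (hasDerivAt_id t).const_mul 2
    have h2 := (((Real.hasDerivAt_exp (2*t)).comp t h1).sub_const
      (Real.exp (2*ζ))).div_const 2
    exact h2.congr_deriv (by ring)
  have hdA : ∀ z, HasDerivAt A (u z * h z) z := fun z =>
    intervalIntegral.integral_hasDerivAt_right ((hu.mul hh_cont).intervalIntegrable _ _)
      ((hu.mul hh_cont).stronglyMeasurableAtFilter _ _) (hu.mul hh_cont).continuousAt
  have hA_cont : Continuous A := continuous_iff_continuousAt.2 fun t => (hdA t).continuousAt
  have hg1 : g 1 = 0 := intervalIntegral.integral_same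
  have hAζ : A ζ = 0 := intervalIntegral.integral_same
  have hhζ : h ζ = 0 := by simp [hh_def]
  -- Step 1 : compute the inner integral
  have step1 : ∀ z ∈ Set.Icc ζ (1:ℝ),
      (∫ y in ζ..1, F z * ((1/2) * Real.exp (-|z - y|) - (1/2) * Real.exp (2*ζ - z - y)) * F y)
        = u z * (A z + h z * g z) := by
    intro z hz
    obtain ⟨hz1, hz2⟩ := hz
    have hker : Continuous fun y =>
        F z * ((1/2) * Real.exp (-|z - y|) - (1/2) * Real.exp (2*ζ - z - y)) * F y := by
      apply Continuous.mul _ hF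
      apply continuous_const.mul
      apply Continuous.sub
      · exact continuous_const.mul (Real.continuous_exp.comp
          ((continuous_const.sub continuous_id).abs.neg))
      · exact continuous_const.mul (Real.continuous_exp.comp
          (continuous_const.sub continuous_id))
    rw [← intervalIntegral.integral_add_adjacent_intervals
      (hker.intervalIntegrable ζ z) (hker.intervalIntegrable z 1)]
    have e1 : (∫ y in ζ..z,
        F z * ((1/2) * Real.exp (-|z - y|) - (1/2) * Real.exp (2*ζ - z - y)) * F y)
          = u z * A z := by
      rw [hA_def, ← intervalIntegral.integral_const_mul]
      apply intervalIntegral.integral_congr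
      intro y hy
      rw [Set.uIcc_of_le hz1] at hy
      have habs : |z - y| = z - y := abs_of_nonneg (by linarith [hy.2])
      have hez := Real.exp_ne_zero z
      have hey := Real.exp_ne_zero y
      simp only [habs, hu_def, hh_def]
      rw [show -(z-y) = -z + y by ring, show 2*ζ - z - y = 2*ζ + -z + -y by ring,
        Real.exp_add, Real.exp_add, Real.exp_add, show (2:ℝ)*y = y + y by ring,
        Real.exp_add, Real.exp_neg z, Real.exp_neg y]
      field_simp
    have e2 : (∫ y in z..1,
        F z * ((1/2) * Real.exp (-|z - y|) - (1/2) * Real.exp (2*ζ - z - y)) * F y)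
          = u z * (h z * g z) := by
      rw [hg_def, show u z * (h z * g z) = (u z * h z) * ∫ y in z..1, u y by ring,
        ← intervalIntegral.integral_const_mul]
      apply intervalIntegral.integral_congr
      intro y hy
      rw [Set.uIcc_of_le hz2] at hy
      have habs : |z - y| = y - z := by
        rw [abs_sub_comm]; exact abs_of_nonneg (by linarith [hy.1])
      have hez := Real.exp_ne_zero z
      have hey := Real.exp_ne_zero y
      simp only [habs, hu_def, hh_def]
      rw [show -(y-z) = -y + z by ring, show 2*ζ - z - y = 2*ζ + -z + -y by ring,
        Real.exp_add, Real.exp_add, Real.exp_add, show (2:ℝ)*z = z + z by ring,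
        Real.exp_add, Real.exp_neg z, Real.exp_neg y]
      field_simp
    rw [e1, e2]; ring
  -- Step 2 : rewrite the double integral
  have step2 : (∫ z in ζ..1, ∫ y in ζ..1,
      F z * ((1/2) * Real.exp (-|z - y|) - (1/2) * Real.exp (2*ζ - z - y)) * F y)
        = ∫ z in ζ..1, u z * (A z + h z * g z) := by
    apply intervalIntegral.integral_congr
    intro z hz
    rw [Set.uIcc_of_le hζ1.le] at hz
    exact step1 z hz
  -- Step 3 : integrate by parts
  have hΨ : ∀ t, HasDerivAt (fun t => g t * A t + h t * g t ^ 2)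
      (Real.exp (2*t) * g t ^ 2 - u t * (A t + h t * g t)) t := by
    intro t
    have h1 := (hdg t).mul (hdA t)
    have h2 := (hdh t).mul ((hdg t).pow 2)
    exact (h1.add h2).congr_deriv (by simp only [Pi.pow_apply]; ring)
  have hcΨ' : Continuous fun t => Real.exp (2*t) * g t ^ 2 - u t * (A t + h t * g t) :=
    ((Real.continuous_exp.comp (continuous_const.mul continuous_id)).mul
      (hg_cont.pow 2)).sub (hu.mul (hA_cont.add (hh_cont.mul hg_cont)))
  have hc1 : Continuous fun t => Real.exp (2*t) * g t ^ 2 :=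
    (Real.continuous_exp.comp (continuous_const.mul continuous_id)).mul (hg_cont.pow 2)
  have hc2 : Continuous fun t => u t * (A t + h t * g t) :=
    hu.mul (hA_cont.add (hh_cont.mul hg_cont))
  have key : (∫ z in ζ..1, u z * (A z + h z * g z))
      = ∫ t in ζ..1, Real.exp (2*t) * g t ^ 2 := by
    have hFTC := intervalIntegral.integral_eq_sub_of_hasDerivAt
      (f := fun t => g t * A t + h t * g t ^ 2)
      (f' := fun t => Real.exp (2*t) * g t ^ 2 - u t * (A t + h t * g t))
      (fun t _ => hΨ t) (hcΨ'.intervalIntegrable ζ 1)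
    rw [intervalIntegral.integral_sub (hc1.intervalIntegrable ζ 1)
      (hc2.intervalIntegrable ζ 1)] at hFTC
    simp only [hg1, hAζ, hhζ] at hFTC
    have : (∫ t in ζ..1, Real.exp (2*t) * g t ^ 2)
        - (∫ t in ζ..1, u t * (A t + h t * g t)) = 0 := by
      rw [hFTC]; ring
    linarith
  rw [step2, key]
  -- Step 4 : g is not identically zero
  have hgne : ∃ t ∈ Set.Icc ζ (1:ℝ), g t ≠ 0 := by
    by_contra hcon
    push_neg at hcon
    have hF0 : ∀ t ∈ Set.Ioo ζ (1:ℝ), F t = 0 := by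
      intro t ht
      have hmem : Set.Icc ζ (1:ℝ) ∈ nhds t := Icc_mem_nhds ht.1 ht.2
      have hev : g =ᶠ[nhds t] fun _ => (0:ℝ) :=
        Filter.eventuallyEq_of_mem hmem fun x hx => hcon x hx
      have h0 : HasDerivAt g 0 t :=
        (hasDerivAt_const t (0:ℝ)).congr_of_eventuallyEq hev
      have hu0 : -(u t) = 0 := (hdg t).unique h0
      have : Real.exp (-t) * F t = 0 := by
        have : u t = 0 := by linarith
        simpa [hu_def] using this
      rcases mul_eq_zero.1 this with h' | h'
      · exact absurd h' (Real.exp_ne_zero _)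
      · exact h'
    have hclosed : Set.Icc ζ (1:ℝ) ⊆ {x | F x = 0} := by
      have hcl : closure (Set.Ioo ζ (1:ℝ)) = Set.Icc ζ 1 := closure_Ioo hζ1.ne
      rw [← hcl]
      exact closure_minimal (fun x hx => hF0 x hx) (isClosed_eq hF continuous_const)
    obtain ⟨z, hz, hzne⟩ := hne
    exact hzne (hclosed hz)
  obtain ⟨t₀, ht₀, hgt₀⟩ := hgne
  have ht₀1 : t₀ < 1 := lt_of_le_of_ne ht₀.2 fun hh => hgt₀ (hh ▸ hg1)
  -- Step 5 : positivity of ∫ exp(2t) g(t)²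
  have hev : ∀ᶠ x in nhds t₀, g x ≠ 0 := hg_cont.continuousAt.eventually_ne hgt₀
  obtain ⟨δ, hδ0, hδ⟩ := Metric.eventually_nhds_iff.1 hev
  set d : ℝ := min 1 (t₀ + δ/2) with hd_def
  have hcd : t₀ < d := lt_min ht₀1 (by linarith)
  have hd1 : d ≤ 1 := min_le_left _ _
  have e := fun t => Real.exp (2*t) * g t ^ 2
  have hnn : ∀ x : ℝ, 0 ≤ Real.exp (2*x) * g x ^ 2 := fun x => by positivity
  have hsplit : (∫ t in ζ..1, Real.exp (2*t) * g t ^ 2)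
      = (∫ t in ζ..t₀, Real.exp (2*t) * g t ^ 2)
        + ((∫ t in t₀..d, Real.exp (2*t) * g t ^ 2)
          + (∫ t in d..1, Real.exp (2*t) * g t ^ 2)) := by
    rw [intervalIntegral.integral_add_adjacent_intervals (hc1.intervalIntegrable t₀ d)
      (hc1.intervalIntegrable d 1),
      intervalIntegral.integral_add_adjacent_intervals (hc1.intervalIntegrable ζ t₀)
      (hc1.intervalIntegrable t₀ 1)]
  have hpos : 0 < ∫ t in t₀..d, Real.exp (2*t) * g t ^ 2 := by
    apply intervalIntegral.intervalIntegral_pos_of_pos_on (hc1.intervalIntegrable t₀ d)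
      _ hcd
    intro x hx
    have hxne : g x ≠ 0 := by
      apply hδ
      have hxd : x < t₀ + δ/2 := lt_of_lt_of_le hx.2 (min_le_right _ _)
      have : |x - t₀| < δ := by
        rw [abs_of_nonneg (by linarith [hx.1])]
        linarith
      simpa [Real.dist_eq] using this
    have hsq : 0 < g x ^ 2 :=
      lt_of_le_of_ne (sq_nonneg _) (Ne.symm (pow_ne_zero 2 hxne))
    exact mul_pos (Real.exp_pos _) hsq
  have hnn1 : 0 ≤ ∫ t in ζ..t₀, Real.exp (2*t) * g t ^ 2 :=
    intervalIntegral.integral_nonneg ht₀.1 fun x _ => hnn x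
  have hnn2 : 0 ≤ ∫ t in d..1, Real.exp (2*t) * g t ^ 2 :=
    intervalIntegral.integral_nonneg hd1 fun x _ => hnn x
  rw [hsplit]
  linarith

/-- The right-child kernel `G_r(z,y) = (1/2)e^{-|z-y|} - (1/2)e^{2ζ-z-y}` is positive
definite on `[ζ,1]`: for every continuous `f : [ζ,1] → ℝ` not identically zero,
`∫_ζ¹∫_ζ¹ f(z) G_r(z,y) f(y) dy dz > 0`. -/
theorem right_child_kernel_positive_definite
    (ζ : ℝ) (hζ0 : 0 < ζ) (hζ1 : ζ < 1)
    (f : ℝ → ℝ) (hf : ContinuousOn f (Set.Icc ζ 1))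
    (hne : ∃ z ∈ Set.Icc ζ (1:ℝ), f z ≠ 0) :
    0 < ∫ z in ζ..1, ∫ y in ζ..1,
          f z * ((1/2) * Real.exp (-|z - y|) - (1/2) * Real.exp (2*ζ - z - y)) * f y := by
  have hle : ζ ≤ (1:ℝ) := hζ1.le
  set F : ℝ → ℝ := Set.IccExtend hle ((Set.Icc ζ 1).restrict f) with hF_def
  have hFc : Continuous F := hf.restrict.Icc_extend'
  have hFeq : ∀ x ∈ Set.Icc ζ (1:ℝ), F x = f x := fun x hx => by
    rw [hF_def, Set.IccExtend_of_mem hle _ hx]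
    rfl
  have hne' : ∃ z ∈ Set.Icc ζ (1:ℝ), F z ≠ 0 := by
    obtain ⟨z, hz, hzne⟩ := hne
    exact ⟨z, hz, by rw [hFeq z hz]; exact hzne⟩
  have hmain := rck_aux ζ hζ1 F hFc hne'
  have heq : (∫ z in ζ..1, ∫ y in ζ..1,
      f z * ((1/2) * Real.exp (-|z - y|) - (1/2) * Real.exp (2*ζ - z - y)) * f y)
        = ∫ z in ζ..1, ∫ y in ζ..1,
      F z * ((1/2) * Real.exp (-|z - y|) - (1/2) * Real.exp (2*ζ - z - y)) * F y := by
    apply intervalIntegral.integral_congr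
    intro z hz
    rw [Set.uIcc_of_le hle] at hz
    apply intervalIntegral.integral_congr
    intro y hy
    rw [Set.uIcc_of_le hle] at hy
    beta_reduce
    rw [hFeq z hz, hFeq y hy]
  rw [heq]
  exact hmain
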